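/- Every pentagon in ℂP² in general position is 5-self-dual: if v : ZMod 5 → ℂ³ \ {0} is such that any three of the vectors v 0, v 1, v 2, v 3, v 4 are linearly independent (no three vertices collinear), then there exists a linear equivalence f : ℂ³ ≃ (ℂ³)* such that f (v j)(v (j+2)) = 0 and f (v j)(v (j+3)) = 0 for every j ∈ ZMod 5. -/

import Mathlib

open Matrix

noncomputable section

lemma key_exists (α β γ p q r : ℂ) (hα : α ≠ 0) (hγ : γ ≠ 0) (hr : r ≠ 0)
    (h1 : q*γ - r*β ≠ 0) (h2 : p*β - q*α ≠ 0) :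
    ∃ f : (Fin 3 → ℂ) ≃ₗ[ℂ] Module.Dual ℂ (Fin 3 → ℂ),
      ∀ x y : Fin 3 → ℂ,
        f x y = ∑ i, ∑ j, x i * (!![(r*β-q*γ)*β*γ*r, (q*γ-r*β)*α*γ*r, 0;
          (q*γ-r*β)*α*γ*r, (r*α-p*γ)*α*γ*r, (p*β-q*α)*α*γ*r;
          0, (p*β-q*α)*α*γ*r, q*(q*α-p*β)*α*γ] : Matrix (Fin 3) (Fin 3) ℂ) i j * y j := by
  set N : Matrix (Fin 3) (Fin 3) ℂ := !![(r*β-q*γ)*β*γ*r, (q*γ-r*β)*α*γ*r, 0;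
          (q*γ-r*β)*α*γ*r, (r*α-p*γ)*α*γ*r, (p*β-q*α)*α*γ*r;
          0, (p*β-q*α)*α*γ*r, q*(q*α-p*β)*α*γ] with hN
  have hdet : N.det = -((q*γ-r*β)^2 * (p*β-q*α)^2 * α^2 * γ^3 * r^2) := by
    rw [hN, Matrix.det_fin_three]
    simp [Matrix.cons_val_zero, Matrix.cons_val_one]
    ring
  have hdet0 : N.det ≠ 0 := by
    rw [hdet]
    simp only [neg_ne_zero]
    exact mul_ne_zero (mul_ne_zero (mul_ne_zero (mul_ne_zero (pow_ne_zero _ h1) (pow_ne_zero _ h2)) (pow_ne_zero _ hα)) (pow_ne_zero _ hγ)) (pow_ne_zero _ hr)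
  set F : (Fin 3 → ℂ) →ₗ[ℂ] (Fin 3 → ℂ) →ₗ[ℂ] ℂ := Matrix.toLinearMap₂' ℂ N with hF
  have hinj : Function.Injective F := by
    rw [injective_iff_map_eq_zero]
    intro x hx
    refine (Matrix.nondegenerate_of_det_ne_zero hdet0).eq_zero_of_ortho fun w => ?_
    have h := Matrix.toLinearMap₂'_apply' N x w
    rw [show (Matrix.toLinearMap₂' ℂ) N = F from rfl, hx] at h
    exact h.symm.trans rfl
  have hdim : Module.finrank ℂ (Fin 3 → ℂ) = Module.finrank ℂ (Module.Dual ℂ (Fin 3 → ℂ)) :=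
    Subspace.dual_finrank_eq.symm
  refine ⟨F.linearEquivOfInjective hinj hdim, fun x y => ?_⟩
  rw [LinearMap.linearEquivOfInjective_apply, hF, Matrix.toLinearMap₂'_apply]
  simp only [smul_eq_mul]
  exact Finset.sum_congr rfl fun i _ => Finset.sum_congr rfl fun j _ => by ring

/-- Every pentagon in general position is 5-self-dual. -/
theorem stmt_4 (v : ZMod 5 → Fin 3 → ℂ) (hv0 : ∀ j, v j ≠ 0)
    (hgen : ∀ i j l : ZMod 5, i ≠ j → i ≠ l → j ≠ l →
      LinearIndependent ℂ ![v i, v j, v l]) :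
    ∃ f : (Fin 3 → ℂ) ≃ₗ[ℂ] Module.Dual ℂ (Fin 3 → ℂ),
      ∀ j : ZMod 5, f (v j) (v (j + 2)) = 0 ∧ f (v j) (v (j + 3)) = 0 := by
  have card_eq : Fintype.card (Fin 3) = Module.finrank ℂ (Fin 3 → ℂ) := by simp
  set b3 := basisOfLinearIndependentOfCardEqFinrank
    (hgen 0 1 2 (by decide) (by decide) (by decide)) card_eq with hb3
  have hb : ⇑b3 = ![v 0, v 1, v 2] :=
    coe_basisOfLinearIndependentOfCardEqFinrank _ _
  set g : (Fin 3 → ℂ) ≃ₗ[ℂ] (Fin 3 → ℂ) := b3.equivFun with hg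
  have hg0 : g (v 0) = ![1, 0, 0] := by
    have : v 0 = b3 0 := by rw [hb]; rfl
    rw [this]
    funext j
    rw [hg]
    rw [Module.Basis.equivFun_self]
    fin_cases j <;> simp
  have hg1 : g (v 1) = ![0, 1, 0] := by
    have : v 1 = b3 1 := by rw [hb]; rfl
    rw [this]
    funext j
    rw [hg, Module.Basis.equivFun_self]
    fin_cases j <;> simp
  have hg2 : g (v 2) = ![0, 0, 1] := by
    have : v 2 = b3 2 := by rw [hb]; rfl
    rw [this]
    funext j
    rw [hg, Module.Basis.equivFun_self]
    fin_cases j <;> simp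
  have hdet : ∀ i j l : ZMod 5, i ≠ j → i ≠ l → j ≠ l →
      Matrix.det (Matrix.of ![g (v i), g (v j), g (v l)]) ≠ 0 := by
    intro i j l hij hil hjl
    have li : LinearIndependent ℂ (⇑g ∘ ![v i, v j, v l]) :=
      (hgen i j l hij hil hjl).map' g.toLinearMap g.ker
    have : (⇑g ∘ ![v i, v j, v l]) = ![g (v i), g (v j), g (v l)] := by
      funext x; fin_cases x <;> rfl
    rw [this] at li
    exact ((Matrix.isUnit_iff_isUnit_det _).mp
      (Matrix.linearIndependent_rows_iff_isUnit.mp li)).ne_zero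
  set α := g (v 3) 0 with ha
  set β := g (v 3) 1 with hbb
  set γ := g (v 3) 2 with hc
  set p := g (v 4) 0 with hp
  set q := g (v 4) 1 with hq
  set r := g (v 4) 2 with hrr
  have hα : α ≠ 0 := by
    have h := hdet 1 2 3 (by decide) (by decide) (by decide)
    rw [hg1, hg2, Matrix.det_fin_three] at h
    simpa using h
  have hγ : γ ≠ 0 := by
    have h := hdet 0 1 3 (by decide) (by decide) (by decide)
    rw [hg0, hg1, Matrix.det_fin_three] at h
    simpa using h
  have hr : r ≠ 0 := by
    have h := hdet 0 1 4 (by decide) (by decide) (by decide)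
    rw [hg0, hg1, Matrix.det_fin_three] at h
    simpa using h
  have h1 : q * γ - r * β ≠ 0 := by
    have h := hdet 0 3 4 (by decide) (by decide) (by decide)
    rw [hg0, Matrix.det_fin_three] at h
    simp only [Matrix.of_apply, Matrix.cons_val_zero, Matrix.cons_val_one, Matrix.head_cons,
      Matrix.cons_val_two, Matrix.tail_cons] at h
    intro hcon
    apply h
    simp only [← ha, ← hbb, ← hc, ← hp, ← hq, ← hrr] at *
    linear_combination -hcon
  have h2 : p * β - q * α ≠ 0 := by
    have h := hdet 2 3 4 (by decide) (by decide) (by decide)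
    rw [hg2, Matrix.det_fin_three] at h
    simp only [Matrix.of_apply, Matrix.cons_val_zero, Matrix.cons_val_one, Matrix.head_cons,
      Matrix.cons_val_two, Matrix.tail_cons] at h
    intro hcon
    apply h
    simp only [← ha, ← hbb, ← hc, ← hp, ← hq, ← hrr] at *
    linear_combination -hcon
  obtain ⟨f₁, hf₁⟩ := key_exists α β γ p q r hα hγ hr h1 h2
  refine ⟨g ≪≫ₗ f₁ ≪≫ₗ g.dualMap, ?_⟩
  have hf : ∀ a b : ZMod 5, (g ≪≫ₗ f₁ ≪≫ₗ g.dualMap) (v a) (v b) = f₁ (g (v a)) (g (v b)) := by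
    intro a b
    simp [LinearEquiv.trans_apply, LinearEquiv.dualMap_apply]
  have H02 : f₁ (g (v 0)) (g (v 2)) = 0 := by
    rw [hf₁, hg0, hg2]; simp [Fin.sum_univ_three]
  have H03 : f₁ (g (v 0)) (g (v 3)) = 0 := by
    rw [hf₁, hg0]; simp [Fin.sum_univ_three, ← ha, ← hbb, ← hc]; ring
  have H13 : f₁ (g (v 1)) (g (v 3)) = 0 := by
    rw [hf₁, hg1]; simp [Fin.sum_univ_three, ← ha, ← hbb, ← hc]; ring
  have H14 : f₁ (g (v 1)) (g (v 4)) = 0 := by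
    rw [hf₁, hg1]; simp [Fin.sum_univ_three, ← hp, ← hq, ← hrr]; ring
  have H24 : f₁ (g (v 2)) (g (v 4)) = 0 := by
    rw [hf₁, hg2]; simp [Fin.sum_univ_three, ← hp, ← hq, ← hrr]; ring
  have H20 : f₁ (g (v 2)) (g (v 0)) = 0 := by
    rw [hf₁, hg2, hg0]; simp [Fin.sum_univ_three]
  have H30 : f₁ (g (v 3)) (g (v 0)) = 0 := by
    rw [hf₁, hg0]; simp [Fin.sum_univ_three, ← ha, ← hbb, ← hc]; ring
  have H31 : f₁ (g (v 3)) (g (v 1)) = 0 := by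
    rw [hf₁, hg1]; simp [Fin.sum_univ_three, ← ha, ← hbb, ← hc]; ring
  have H41 : f₁ (g (v 4)) (g (v 1)) = 0 := by
    rw [hf₁, hg1]; simp [Fin.sum_univ_three, ← hp, ← hq, ← hrr]; ring
  have H42 : f₁ (g (v 4)) (g (v 2)) = 0 := by
    rw [hf₁, hg2]; simp [Fin.sum_univ_three, ← hp, ← hq, ← hrr]; ring
  intro j
  fin_cases j
  · exact ⟨(hf 0 2).trans H02, (hf 0 3).trans H03⟩
  · exact ⟨(hf 1 3).trans H13, (hf 1 4).trans H14⟩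
  · exact ⟨(hf 2 4).trans H24, (hf 2 0).trans H20⟩
  · exact ⟨(hf 3 0).trans H30, (hf 3 1).trans H31⟩
  · exact ⟨(hf 4 1).trans H41, (hf 4 2).trans H42⟩

end
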